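/- Let ε ∈ (0, 1/2], let H be a graph with vertex set {g_1,…,g_h}, h ≥ 2, let G be a graph, A_1,…,A_h ⊆ V(G) nonempty and disjoint, and μ a submeasure on G. Then either (a) there is a copy φ of H in G with φ(g_i) ∈ A_i for all i ∈ [h]; or (b) there exist indices i < j in [h] and sets D_i ⊆ A_i, D_j ⊆ A_j with μ(D_i) ≥ ε^{h−2}·μ(A_i) and μ(D_j) ≥ ε^{h−2}·μ(A_j) such that either μ(D_j ∩ N_G(v)) < ε·μ(D_j) for all v ∈ D_i, or μ(D_j \ N_G(v)) < ε·μ(D_j) for all v ∈ D_i. -/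

import Mathlib

open SimpleGraph

/-- The chromatic number of the subgraph of `G` induced on `S`, as a natural number. -/
noncomputable def chiSet {V : Type*} (G : SimpleGraph V) (S : Set V) : ℕ :=
  (G.induce S).chromaticNumber.toNat

/-- The chromatic number of `G`, as a natural number. -/
noncomputable def chi {V : Type*} (G : SimpleGraph V) : ℕ :=
  G.chromaticNumber.toNat

/-- `(A, B)` is an anticomplete pair: no edge of `G` joins `A` and `B`. -/
def Anticomplete {V : Type*} (G : SimpleGraph V) (A B : Set V) : Prop :=
  ∀ a ∈ A, ∀ b ∈ B, ¬ G.Adj a b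

/-- `G` is `H`-free: no induced subgraph of `G` is isomorphic to `H`. -/
def FreeOf {V W : Type*} (G : SimpleGraph V) (H : SimpleGraph W) : Prop :=
  IsEmpty (H ↪g G)

/-- A submeasure on the vertex set: zero on `∅`, one on singletons, monotone, subadditive. -/
structure IsSubmeasure {V : Type*} (μ : Set V → ℝ) : Prop where
  empty : μ ∅ = 0
  single : ∀ v : V, μ {v} = 1
  mono : ∀ ⦃X Y : Set V⦄, X ⊆ Y → μ X ≤ μ Y
  subadd : ∀ A B : Set V, μ (A ∪ B) ≤ μ A + μ B

section helpers
variable {V : Type*} {μ : Set V → ℝ}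

lemma sm_nonneg (hμ : IsSubmeasure μ) (X : Set V) : 0 ≤ μ X := by
  have := hμ.mono (Set.empty_subset X); rwa [hμ.empty] at this

lemma sm_one_le (hμ : IsSubmeasure μ) {X : Set V} (hX : X.Nonempty) : 1 ≤ μ X := by
  obtain ⟨v, hv⟩ := hX
  have := hμ.mono (Set.singleton_subset_iff.mpr hv)
  rwa [hμ.single] at this

lemma sm_biUnion_le (hμ : IsSubmeasure μ) {ι : Type*} [DecidableEq ι] (s : Finset ι)
    (f : ι → Set V) : μ (⋃ i ∈ s, f i) ≤ ∑ i ∈ s, μ (f i) := by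
  induction s using Finset.induction with
  | empty => simp [hμ.empty]
  | insert a s hnot ih =>
    rw [Finset.set_biUnion_insert, Finset.sum_insert hnot]
    exact le_trans (hμ.subadd _ _) (by linarith)

end helpers

lemma card_pow_bound {ε : ℝ} (hε0 : 0 < ε) (hε : ε ≤ 1 / 2) (m : ℕ) (hm : 1 ≤ m) :
    (m : ℝ) * ε ^ (m - 1) ≤ 1 := by
  have h1 : (m : ℝ) ≤ 2 ^ (m - 1) := by
    have h2 := (m - 1).lt_two_pow_self
    have h3 : m ≤ 2 ^ (m - 1) := by omega
    exact_mod_cast h3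
  have h2 : ε ^ (m - 1) ≤ (1 / 2 : ℝ) ^ (m - 1) := pow_le_pow_left₀ hε0.le hε _
  calc (m : ℝ) * ε ^ (m - 1) ≤ (2 : ℝ) ^ (m - 1) * (1 / 2 : ℝ) ^ (m - 1) :=
        mul_le_mul h1 h2 (pow_nonneg hε0.le _) (by positivity)
    _ = 1 := by rw [← mul_pow]; norm_num

lemma ehi_aux {V : Type*} (ε : ℝ) (hε0 : 0 < ε) (hε : ε ≤ 1 / 2)
    (h : ℕ) (hh : 2 ≤ h) (H : SimpleGraph (Fin h)) (G : SimpleGraph V)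
    (A : Fin h → Set V) (hA : ∀ i, (A i).Nonempty)
    (hdisj : ∀ i j, i ≠ j → Disjoint (A i) (A j))
    (μ : Set V → ℝ) (hμ : IsSubmeasure μ) :
    ∀ m k : ℕ, k + m = h →
    ∀ (B : Fin h → Set V) (φ : Fin h → V),
    (∀ j, B j ⊆ A j) →
    (∀ j : Fin h, k ≤ j.val → ε ^ k * μ (A j) ≤ μ (B j)) →
    (∀ i : Fin h, i.val < k → φ i ∈ A i) →
    (∀ i i' : Fin h, i.val < i'.val → i'.val < k → (H.Adj i i' ↔ G.Adj (φ i) (φ i'))) →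
    (∀ i j : Fin h, i.val < k → k ≤ j.val → ∀ w ∈ B j, (H.Adj i j ↔ G.Adj (φ i) w)) →
    ((∃ φ : Fin h → V, Function.Injective φ ∧
        (∀ u v : Fin h, H.Adj u v ↔ G.Adj (φ u) (φ v)) ∧ ∀ i, φ i ∈ A i) ∨
      (∃ i j : Fin h, i < j ∧ ∃ Di Dj : Set V, Di ⊆ A i ∧ Dj ⊆ A j ∧
        ε ^ (h - 2) * μ (A i) ≤ μ Di ∧ ε ^ (h - 2) * μ (A j) ≤ μ Dj ∧
        ((∀ v ∈ Di, μ (Dj ∩ G.neighborSet v) < ε * μ Dj) ∨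
          (∀ v ∈ Di, μ (Dj \ G.neighborSet v) < ε * μ Dj)))) := by
  intro m
  induction m with
  | zero =>
    intro k hk B φ hBA hBμ hφA hφadj hφB
    have hkh : k = h := by omega
    subst hkh
    left
    refine ⟨φ, ?_, ?_, fun i => hφA i i.isLt⟩
    · intro a b hab
      by_contra hne
      have h1 := hφA a a.isLt
      have h2 := hφA b b.isLt
      rw [hab] at h1
      exact Set.disjoint_left.mp (hdisj b a (Ne.symm hne)) h2 h1
    · intro u v
      rcases lt_trichotomy u.val v.val with hlt | heq | hgt
      · exact hφadj u v hlt v.isLt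
      · have : u = v := Fin.ext heq
        subst this
        exact ⟨fun hadj => absurd hadj (H.irrefl), fun hadj => absurd hadj (G.irrefl)⟩
      · rw [H.adj_comm, G.adj_comm]
        exact hφadj v u hgt u.isLt
  | succ m ih =>
    intro k hk B φ hBA hBμ hφA hφadj hφB
    classical
    have hkh : k < h := by omega
    set K : Fin h := ⟨k, hkh⟩ with hK
    set Bad : Fin h → Set V := fun j =>
      {v | v ∈ B K ∧ if H.Adj K j then μ (B j ∩ G.neighborSet v) < ε * μ (B j)
        else μ (B j \ G.neighborSet v) < ε * μ (B j)} with hBad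
    by_cases hcase : ∃ j : Fin h, K < j ∧ ε ^ (h - 2) * μ (A K) ≤ μ (Bad j)
    · obtain ⟨j, hKj, hmeas⟩ := hcase
      right
      have hkj : k < j.val := by
        have := Fin.lt_def.mp hKj; simpa [hK] using this
      refine ⟨K, j, hKj, Bad j, B j, fun v hv => hBA K hv.1, hBA j, hmeas, ?_, ?_⟩
      · have hle : ε ^ (h - 2) ≤ ε ^ k :=
          pow_le_pow_of_le_one hε0.le (by linarith) (by omega)
        calc ε ^ (h - 2) * μ (A j) ≤ ε ^ k * μ (A j) :=
              mul_le_mul_of_nonneg_right hle (sm_nonneg hμ _)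
          _ ≤ μ (B j) := hBμ j (le_of_lt hkj)
      · by_cases hadj : H.Adj K j
        · left
          intro v hv
          have := hv.2
          rwa [if_pos hadj] at this
        · right
          intro v hv
          have := hv.2
          rwa [if_neg hadj] at this
    · push_neg at hcase
      have hgood : ∃ v ∈ B K, ∀ j : Fin h, K < j → v ∉ Bad j := by
        by_contra hbad
        push_neg at hbad
        have hsub : B K ⊆ ⋃ j ∈ Finset.Ioi K, Bad j := by
          intro v hv
          obtain ⟨j, hj1, hj2⟩ := hbad v hv
          exact Set.mem_biUnion (Finset.mem_Ioi.mpr hj1) hj2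
        have hAK1 : (1 : ℝ) ≤ μ (A K) := sm_one_le hμ (hA K)
        have hBK : ε ^ k * μ (A K) ≤ μ (B K) := hBμ K (le_refl k)
        have hεk : (0 : ℝ) < ε ^ k := pow_pos hε0 k
        rcases Finset.eq_empty_or_nonempty (Finset.Ioi K) with hemp | hne
        · rw [hemp] at hsub
          simp only [Finset.notMem_empty, Set.iUnion_of_empty, Set.iUnion_empty] at hsub
          have h0 : μ (B K) ≤ 0 := by
            have := hμ.mono hsub; rwa [hμ.empty] at this
          nlinarith
        · have hcard : (Finset.Ioi K).card = m := by
            rw [Fin.card_Ioi]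
            simp only [hK]
            omega
          have hm1 : 1 ≤ m := by
            have := Finset.card_pos.mpr hne
            omega
          have hsum : μ (B K) ≤ ∑ j ∈ Finset.Ioi K, μ (Bad j) :=
            le_trans (hμ.mono hsub) (sm_biUnion_le hμ _ _)
          have hlt : ∑ j ∈ Finset.Ioi K, μ (Bad j)
              < ∑ _j ∈ Finset.Ioi K, ε ^ (h - 2) * μ (A K) :=
            Finset.sum_lt_sum_of_nonempty hne (fun j hj => hcase j (Finset.mem_Ioi.mp hj))
          rw [Finset.sum_const, hcard, nsmul_eq_mul] at hlt
          have hb : (m : ℝ) * (ε ^ (h - 2) * μ (A K)) ≤ ε ^ k * μ (A K) := by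
            have hsplit : ε ^ (h - 2) = ε ^ k * ε ^ (m - 1) := by
              rw [← pow_add]; congr 1; omega
            rw [hsplit]
            have hcpb := card_pow_bound hε0 hε m hm1
            have hnn : (0 : ℝ) ≤ ε ^ k * μ (A K) :=
              mul_nonneg (le_of_lt hεk) (sm_nonneg hμ _)
            calc (m : ℝ) * (ε ^ k * ε ^ (m - 1) * μ (A K))
                = ((m : ℝ) * ε ^ (m - 1)) * (ε ^ k * μ (A K)) := by ring
              _ ≤ 1 * (ε ^ k * μ (A K)) := mul_le_mul_of_nonneg_right hcpb hnn
              _ = ε ^ k * μ (A K) := one_mul _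
          linarith
      obtain ⟨v, hvB, hvgood⟩ := hgood
      set B' : Fin h → Set V := fun j =>
        if k < j.val then
          (if H.Adj K j then B j ∩ G.neighborSet v else B j \ G.neighborSet v)
        else B j with hB'
      set φ' : Fin h → V := Function.update φ K v with hφ'
      apply ih (k + 1) (by omega) B' φ'
      · intro j
        simp only [hB']
        split_ifs with h1 h2
        · exact Set.inter_subset_left.trans (hBA j)
        · exact Set.diff_subset.trans (hBA j)
        · exact hBA j
      · intro j hj
        have hkj : k < j.val := by omega
        have hKj : K < j := by rw [Fin.lt_def]; simpa [hK] using hkj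
        have hnb := hvgood j hKj
        have hiff : ¬ (if H.Adj K j then μ (B j ∩ G.neighborSet v) < ε * μ (B j)
            else μ (B j \ G.neighborSet v) < ε * μ (B j)) := fun hc => hnb ⟨hvB, hc⟩
        have h1 : ε ^ k * μ (A j) ≤ μ (B j) := hBμ j (le_of_lt hkj)
        have h2 : ε ^ (k + 1) * μ (A j) ≤ ε * μ (B j) := by
          have : ε ^ (k + 1) * μ (A j) = ε * (ε ^ k * μ (A j)) := by ring
          rw [this]
          exact mul_le_mul_of_nonneg_left h1 hε0.le
        simp only [hB', if_pos hkj]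
        by_cases hadj : H.Adj K j
        · rw [if_pos hadj] at hiff ⊢
          exact le_trans h2 (not_lt.mp hiff)
        · rw [if_neg hadj] at hiff ⊢
          exact le_trans h2 (not_lt.mp hiff)
      · intro i hi
        rcases Nat.lt_or_ge i.val k with hik | hik
        · have hne : i ≠ K := by
            intro hc; rw [hc] at hik; simp [hK] at hik
          rw [hφ', Function.update_of_ne hne]
          exact hφA i hik
        · have hieq : i = K := by
            apply Fin.ext; simp [hK]; omega
          rw [hieq, hφ', Function.update_self]
          exact hBA K hvB
      · intro i i' hii' hi'
        have hik : i.val < k := by omega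
        have hne : i ≠ K := by
          intro hc; rw [hc] at hik; simp [hK] at hik
        rw [hφ', Function.update_of_ne hne]
        rcases Nat.lt_or_ge i'.val k with hik' | hik'
        · have hne' : i' ≠ K := by
            intro hc; rw [hc] at hik'; simp [hK] at hik'
          rw [Function.update_of_ne hne']
          exact hφadj i i' hii' hik'
        · have hieq : i' = K := by
            apply Fin.ext; simp [hK]; omega
          rw [hieq, Function.update_self]
          exact hφB i K hik (by simp [hK]) v hvB
      · intro i j hi hj w hw
        have hkj : k < j.val := by omega
        simp only [hB', if_pos hkj] at hw
        rcases Nat.lt_or_ge i.val k with hik | hik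
        · have hne : i ≠ K := by
            intro hc; rw [hc] at hik; simp [hK] at hik
          rw [hφ', Function.update_of_ne hne]
          have hwB : w ∈ B j := by
            by_cases hadj : H.Adj K j
            · rw [if_pos hadj] at hw; exact hw.1
            · rw [if_neg hadj] at hw; exact hw.1
          exact hφB i j hik (le_of_lt hkj) w hwB
        · have hieq : i = K := by
            apply Fin.ext; simp [hK]; omega
          rw [hieq, hφ', Function.update_self]
          by_cases hadj : H.Adj K j
          · rw [if_pos hadj] at hw
            exact iff_of_true hadj ((G.mem_neighborSet v w).mp hw.2)
          · rw [if_neg hadj] at hw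
            exact iff_of_false hadj (fun hG => hw.2 ((G.mem_neighborSet v w).mpr hG))


/-- Erdős–Hajnal iteration lemma: For `ε ∈ (0, 1/2]`, a graph `H` on
`{g₁, …, g_h}` with `h ≥ 2`, nonempty disjoint `A₁, …, A_h ⊆ V(G)`, and a submeasure
`μ` on `G`: either there is a copy `φ` of `H` in `G` with `φ(gᵢ) ∈ Aᵢ` for all `i`, or
there are `i < j` and `Dᵢ ⊆ Aᵢ`, `D_j ⊆ A_j` with `μ(Dᵢ) ≥ ε^{h−2}·μ(Aᵢ)`,
`μ(D_j) ≥ ε^{h−2}·μ(A_j)`, such that `Dᵢ` is `ε`-sparse or `(1−ε)`-dense to `D_j`. -/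
theorem stmt_9 {V : Type*} (ε : ℝ) (hε0 : 0 < ε) (hε : ε ≤ 1 / 2)
    (h : ℕ) (hh : 2 ≤ h) (H : SimpleGraph (Fin h)) (G : SimpleGraph V)
    (A : Fin h → Set V) (hA : ∀ i, (A i).Nonempty)
    (hdisj : ∀ i j, i ≠ j → Disjoint (A i) (A j))
    (μ : Set V → ℝ) (hμ : IsSubmeasure μ) :
    (∃ φ : Fin h → V, Function.Injective φ ∧
        (∀ u v : Fin h, H.Adj u v ↔ G.Adj (φ u) (φ v)) ∧ ∀ i, φ i ∈ A i) ∨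
      (∃ i j : Fin h, i < j ∧ ∃ Di Dj : Set V, Di ⊆ A i ∧ Dj ⊆ A j ∧
        ε ^ (h - 2) * μ (A i) ≤ μ Di ∧ ε ^ (h - 2) * μ (A j) ≤ μ Dj ∧
        ((∀ v ∈ Di, μ (Dj ∩ G.neighborSet v) < ε * μ Dj) ∨
          (∀ v ∈ Di, μ (Dj \ G.neighborSet v) < ε * μ Dj))) := by
  have hne : (A ⟨0, by omega⟩).Nonempty := hA _
  apply ehi_aux ε hε0 hε h hh H G A hA hdisj μ hμ h 0 (by omega) A
    (fun _ => hne.choose)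
  · intro j; exact le_refl _
  · intro j _; simp
  · intro i hi; omega
  · intro i i' h1 h2; omega
  · intro i j hi; omega
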